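/- For every integer N ≥ 0 and every integer n with −N ≤ n ≤ N, the function F_{Nn} is an eigenfunction of the generator of rotations about the x₃-axis with eigenvalue n: for every x ∈ ℝ³ ∖ {0}, −i(x₁ ∂₂F_{Nn}(x) − x₂ ∂₁F_{Nn}(x)) = n · F_{Nn}(x). -/

import Mathlib

open Real Finset

noncomputable section

/-- `ℝ³` with the Euclidean norm. -/
abbrev E3 : Type := EuclideanSpace ℝ (Fin 3)

/-- Partial derivative `∂ᵢ` of a complex-valued function on `ℝ³`. -/
def pd (i : Fin 3) (f : E3 → ℂ) : E3 → ℂ :=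
  fun x => fderiv ℝ f x (EuclideanSpace.single i 1)

/-- The complex derivative `∂ = (1/2)(∂₁ - i∂₂)`. -/
def cd (f : E3 → ℂ) : E3 → ℂ :=
  fun x => (1 / 2 : ℂ) * (pd 0 f x - Complex.I * pd 1 f x)

/-- The complex derivative `∂̄ = (1/2)(∂₁ + i∂₂)`. -/
def cdbar (f : E3 → ℂ) : E3 → ℂ :=
  fun x => (1 / 2 : ℂ) * (pd 0 f x + Complex.I * pd 1 f x)

/-- `1/r`, the Coulomb potential centred at the origin. -/
def invr : E3 → ℂ := fun x => ((‖x‖ : ℝ) : ℂ)⁻¹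

/-- `F_{Nn} = ∂̄ⁿ ∂₃^{N-n} (1/r)` for `n ≥ 0`, and
`F_{Nn} = ∂^{-n} ∂₃^{N+n} (1/r)` for `n < 0`. -/
def Fnn (N : ℕ) (n : ℤ) : E3 → ℂ :=
  if 0 ≤ n then cdbar^[n.toNat] ((pd 2)^[((N : ℤ) - n).toNat] invr)
  else cd^[(-n).toNat] ((pd 2)^[((N : ℤ) + n).toNat] invr)

def monoE (ε : ℂ) (m a : ℕ) (b : ℤ) : E3 → ℂ :=
  fun x => ((x 0 : ℝ) + ε * ((x 1 : ℝ) : ℂ))^m * (((x 2)^a : ℝ) : ℂ) * ((‖x‖^b : ℝ) : ℂ)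

lemma hasFDerivAt_norm3 (x : E3) (hx : x ≠ 0) :
    HasFDerivAt (fun y : E3 => ‖y‖) (‖x‖⁻¹ • (innerSL ℝ x : E3 →L[ℝ] ℝ)) x := by
  have h1 : HasFDerivAt (fun y : E3 => ‖y‖ ^ 2) (2 • (innerSL ℝ x : E3 →L[ℝ] ℝ)) x :=
    (hasStrictFDerivAt_norm_sq x).hasFDerivAt
  have hne : ‖x‖ ^ 2 ≠ 0 := pow_ne_zero 2 (norm_ne_zero_iff.2 hx)
  have h2 := h1.sqrt hne
  have he : (fun y : E3 => √(‖y‖ ^ 2)) = fun y : E3 => ‖y‖ := by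
    funext y; exact Real.sqrt_sq (norm_nonneg y)
  rw [he] at h2
  refine h2.congr_fderiv ?_
  rw [Real.sqrt_sq (norm_nonneg x)]
  ext v
  simp [ContinuousLinearMap.smul_apply, smul_smul]
  ring_nf

@[simp] lemma proj3_apply (j : Fin 3) (v : E3) :
    (EuclideanSpace.proj j : E3 →L[ℝ] ℝ) v = v j := rfl

@[simp] lemma proj3_apply' (j : Fin 3) (v : E3) :
    (PiLp.proj (𝕜 := ℝ) 2 (fun _ : Fin 3 => ℝ) j) v = v j := rfl

lemma monoE_pd (ε : ℂ) (m a : ℕ) (b : ℤ) (x : E3) (hx : x ≠ 0) (i : Fin 3) :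
    pd i (monoE ε m a b) x =
      (m : ℂ) * (((x 0 : ℝ) : ℂ) + ε * ((x 1 : ℝ) : ℂ))^(m-1)
          * (((EuclideanSpace.single i (1:ℝ)) 0 : ℝ) + ε * ((EuclideanSpace.single i (1:ℝ)) 1 : ℝ))
          * (((x 2)^a : ℝ) : ℂ) * ((‖x‖^b : ℝ) : ℂ)
      + (((x 0 : ℝ) : ℂ) + ε * ((x 1 : ℝ) : ℂ))^m
          * ((a : ℂ) * (((x 2)^(a-1) : ℝ) : ℂ) * (((EuclideanSpace.single i (1:ℝ)) 2 : ℝ) : ℂ))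
          * ((‖x‖^b : ℝ) : ℂ)
      + (((x 0 : ℝ) : ℂ) + ε * ((x 1 : ℝ) : ℂ))^m * (((x 2)^a : ℝ) : ℂ)
          * ((b : ℂ) * ((‖x‖^(b-2) : ℝ) : ℂ) * ((x i : ℝ) : ℂ)) := by
  have hxn : ‖x‖ ≠ 0 := norm_ne_zero_iff.2 hx
  have hc : ∀ j : Fin 3, HasFDerivAt (fun y : E3 => ((y j : ℝ) : ℂ))
      ((Complex.ofRealCLM).comp (EuclideanSpace.proj j)) x := fun j =>
    ((Complex.ofRealCLM).comp (EuclideanSpace.proj j)).hasFDerivAt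
  have hw : HasFDerivAt (fun y : E3 => ((y 0 : ℝ) : ℂ) + ε * ((y 1 : ℝ) : ℂ))
      (Complex.ofRealCLM.comp (EuclideanSpace.proj 0)
        + ε • Complex.ofRealCLM.comp (EuclideanSpace.proj 1)) x :=
    (hc 0).add ((hc 1).const_mul ε)
  have hzp : HasDerivAt (fun z : ℂ => z ^ m)
      ((m : ℂ) * (((x 0 : ℝ) : ℂ) + ε * ((x 1 : ℝ) : ℂ))^(m-1))
      (((x 0 : ℝ) : ℂ) + ε * ((x 1 : ℝ) : ℂ)) := hasDerivAt_pow m _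
  have hwm := ((hzp.hasFDerivAt).restrictScalars ℝ).comp x hw
  have hpa : HasDerivAt (fun t : ℝ => t ^ a) ((a : ℝ) * (x 2)^(a-1)) (x 2) := hasDerivAt_pow a _
  have hXa := hpa.comp_hasFDerivAt x (EuclideanSpace.proj (2 : Fin 3) : E3 →L[ℝ] ℝ).hasFDerivAt
  have hXa' := Complex.ofRealCLM.hasFDerivAt.comp x hXa
  have hzb : HasDerivAt (fun t : ℝ => t ^ b) ((b : ℝ) * ‖x‖^(b-1)) ‖x‖ :=
    hasDerivAt_zpow b _ (Or.inl hxn)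
  have hRb := hzb.comp_hasFDerivAt x (hasFDerivAt_norm3 x hx)
  have hRb' := Complex.ofRealCLM.hasFDerivAt.comp x hRb
  have hM := (hwm.mul hXa').mul hRb'
  have hM' : HasFDerivAt (monoE ε m a b) _ x := hM
  simp only [pd]
  rw [hM'.fderiv]
  simp only [ContinuousLinearMap.add_apply, ContinuousLinearMap.smul_apply,
    ContinuousLinearMap.coe_comp', Function.comp_apply, ContinuousLinearMap.coe_restrictScalars',
    ContinuousLinearMap.smulRight_apply, ContinuousLinearMap.one_apply,
    Complex.ofRealCLM_apply, innerSL_apply_apply, smul_eq_mul, proj3_apply,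
    starRingEnd_apply, star_trivial, Pi.mul_apply, ContinuousLinearMap.toSpanSingleton_apply]
  rw [EuclideanSpace.inner_single_right]
  simp only [starRingEnd_apply, star_trivial]
  have hzz : (‖x‖ : ℂ) ≠ 0 := by exact_mod_cast hxn
  push_cast
  rw [show ((‖x‖:ℂ))^(b-2) = (‖x‖:ℂ)^(b-1) * (‖x‖:ℂ)⁻¹ by
    rw [show b - 2 = b - 1 + (-1) by ring, zpow_add₀ hzz, zpow_neg_one]]
  ring

lemma monoE_differentiableAt (ε : ℂ) (m a : ℕ) (b : ℤ) (x : E3) (hx : x ≠ 0) :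
    DifferentiableAt ℝ (monoE ε m a b) x := by
  have hxn : ‖x‖ ≠ 0 := norm_ne_zero_iff.2 hx
  have hc : ∀ j : Fin 3, HasFDerivAt (fun y : E3 => ((y j : ℝ) : ℂ))
      ((Complex.ofRealCLM).comp (EuclideanSpace.proj j)) x := fun j =>
    ((Complex.ofRealCLM).comp (EuclideanSpace.proj j)).hasFDerivAt
  have hw : HasFDerivAt (fun y : E3 => ((y 0 : ℝ) : ℂ) + ε * ((y 1 : ℝ) : ℂ))
      (Complex.ofRealCLM.comp (EuclideanSpace.proj 0)
        + ε • Complex.ofRealCLM.comp (EuclideanSpace.proj 1)) x :=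
    (hc 0).add ((hc 1).const_mul ε)
  have hzp : HasDerivAt (fun z : ℂ => z ^ m)
      ((m : ℂ) * (((x 0 : ℝ) : ℂ) + ε * ((x 1 : ℝ) : ℂ))^(m-1))
      (((x 0 : ℝ) : ℂ) + ε * ((x 1 : ℝ) : ℂ)) := hasDerivAt_pow m _
  have hwm := ((hzp.hasFDerivAt).restrictScalars ℝ).comp x hw
  have hpa : HasDerivAt (fun t : ℝ => t ^ a) ((a : ℝ) * (x 2)^(a-1)) (x 2) := hasDerivAt_pow a _
  have hXa := hpa.comp_hasFDerivAt x (EuclideanSpace.proj (2 : Fin 3) : E3 →L[ℝ] ℝ).hasFDerivAt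
  have hXa' := Complex.ofRealCLM.hasFDerivAt.comp x hXa
  have hzb : HasDerivAt (fun t : ℝ => t ^ b) ((b : ℝ) * ‖x‖^(b-1)) ‖x‖ :=
    hasDerivAt_zpow b _ (Or.inl hxn)
  have hRb := hzb.comp_hasFDerivAt x (hasFDerivAt_norm3 x hx)
  have hRb' := Complex.ofRealCLM.hasFDerivAt.comp x hRb
  have hM := (hwm.mul hXa').mul hRb'
  have hM' : HasFDerivAt (monoE ε m a b) _ x := hM
  exact hM'.differentiableAt

lemma monoE_pd2 (ε : ℂ) (m a : ℕ) (b : ℤ) (x : E3) (hx : x ≠ 0) :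
    pd 2 (monoE ε m a b) x
      = (a : ℂ) * monoE ε m (a-1) b x + (b : ℂ) * monoE ε m (a+1) (b-2) x := by
  rw [monoE_pd ε m a b x hx 2]
  simp only [monoE, EuclideanSpace.single_apply]
  norm_num
  push_cast
  ring

lemma monoE_T (ε : ℂ) (hε : ε ^ 2 = -1) (m a : ℕ) (b : ℤ) (x : E3) (hx : x ≠ 0) :
    (1/2 : ℂ) * (pd 0 (monoE ε m a b) x + ε * pd 1 (monoE ε m a b) x)
      = ((b : ℂ)/2) * monoE ε (m+1) a (b-2) x := by
  rw [monoE_pd ε m a b x hx 0, monoE_pd ε m a b x hx 1]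
  simp only [monoE, EuclideanSpace.single_apply]
  norm_num
  push_cast
  linear_combination ((1/2 : ℂ) * (m : ℂ) * (((x 0 : ℝ) : ℂ) + ε * ((x 1 : ℝ) : ℂ))^(m-1)
    * ((x 2 : ℝ) : ℂ)^a * ((‖x‖ : ℂ))^b) * hε

lemma monoE_J3 (ε : ℂ) (hε : ε ^ 2 = -1) (m a : ℕ) (b : ℤ) (x : E3) (hx : x ≠ 0) :
    -Complex.I * ((x 0 : ℂ) * pd 1 (monoE ε m a b) x - (x 1 : ℂ) * pd 0 (monoE ε m a b) x)
      = -Complex.I * ε * (m : ℂ) * monoE ε m a b x := by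
  rw [monoE_pd ε m a b x hx 0, monoE_pd ε m a b x hx 1]
  simp only [monoE, EuclideanSpace.single_apply]
  norm_num
  push_cast
  rcases m with _ | m
  · norm_num
    ring
  · have hm : (m + 1) - 1 = m := rfl
    rw [hm]
    push_cast
    linear_combination (-Complex.I * ((m : ℂ) + 1) * ((x 1 : ℝ) : ℂ)
      * (((x 0 : ℝ) : ℂ) + ε * ((x 1 : ℝ) : ℂ))^m * ((x 2 : ℝ) : ℂ)^a * ((‖x‖ : ℂ))^b) * hε

inductive InSpan (ε : ℂ) : ℕ → (E3 → ℂ) → Prop where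
  | mono (m a : ℕ) (b : ℤ) : InSpan ε m (monoE ε m a b)
  | zero (m : ℕ) : InSpan ε m (fun _ => 0)
  | add {m f g} : InSpan ε m f → InSpan ε m g → InSpan ε m (fun x => f x + g x)
  | mul (c : ℂ) {m f} : InSpan ε m f → InSpan ε m (fun x => c * f x)

lemma InSpan.diff {ε : ℂ} {m : ℕ} {f : E3 → ℂ} (h : InSpan ε m f) :
    ∀ x : E3, x ≠ 0 → DifferentiableAt ℝ f x := by
  induction h with
  | mono m a b => exact fun x hx => monoE_differentiableAt ε m a b x hx
  | zero m => exact fun x hx => differentiableAt_const 0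
  | add hf hg ihf ihg => exact fun x hx => (ihf x hx).add (ihg x hx)
  | mul c hf ihf => exact fun x hx => (ihf x hx).const_mul c

lemma pd_congr (i : Fin 3) {f g : E3 → ℂ} {x : E3} (hx : x ≠ 0)
    (h : ∀ y : E3, y ≠ 0 → f y = g y) : pd i f x = pd i g x := by
  simp only [pd]
  congr 1
  apply Filter.EventuallyEq.fderiv_eq
  filter_upwards [IsOpen.mem_nhds isOpen_compl_singleton hx] with y hy
  exact h y hy

lemma pd_add (i : Fin 3) {f g : E3 → ℂ} {x : E3} (hf : DifferentiableAt ℝ f x)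
    (hg : DifferentiableAt ℝ g x) :
    pd i (fun y => f y + g y) x = pd i f x + pd i g x := by
  simp only [pd, fderiv_fun_add hf hg, ContinuousLinearMap.add_apply]

lemma pd_const_mul (i : Fin 3) {f : E3 → ℂ} {x : E3} (c : ℂ) (hf : DifferentiableAt ℝ f x) :
    pd i (fun y => c * f y) x = c * pd i f x := by
  simp only [pd, fderiv_const_mul hf c, ContinuousLinearMap.smul_apply, smul_eq_mul]

lemma InSpan.pd2 {ε : ℂ} {m : ℕ} {f : E3 → ℂ} (h : InSpan ε m f) :
    ∃ g, InSpan ε m g ∧ ∀ x : E3, x ≠ 0 → pd 2 f x = g x := by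
  induction h with
  | mono m a b =>
    exact ⟨fun x => (a : ℂ) * monoE ε m (a-1) b x + (b : ℂ) * monoE ε m (a+1) (b-2) x,
      .add (.mul _ (.mono m (a-1) b)) (.mul _ (.mono m (a+1) (b-2))),
      fun x hx => monoE_pd2 ε m a b x hx⟩
  | zero m =>
    refine ⟨fun _ => 0, .zero m, fun x hx => ?_⟩
    simp [pd, fderiv_const]
  | add hf hg ihf ihg =>
    obtain ⟨g₁, hg₁, he₁⟩ := ihf
    obtain ⟨g₂, hg₂, he₂⟩ := ihg
    refine ⟨fun x => g₁ x + g₂ x, .add hg₁ hg₂, fun x hx => ?_⟩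
    rw [pd_add 2 (hf.diff x hx) (hg.diff x hx), he₁ x hx, he₂ x hx]
  | mul c hf ihf =>
    obtain ⟨g₁, hg₁, he₁⟩ := ihf
    refine ⟨fun x => c * g₁ x, .mul c hg₁, fun x hx => ?_⟩
    rw [pd_const_mul 2 c (hf.diff x hx), he₁ x hx]

lemma InSpan.T {ε : ℂ} (hε : ε ^ 2 = -1) {m : ℕ} {f : E3 → ℂ} (h : InSpan ε m f) :
    ∃ g, InSpan ε (m+1) g ∧
      ∀ x : E3, x ≠ 0 → (1/2 : ℂ) * (pd 0 f x + ε * pd 1 f x) = g x := by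
  induction h with
  | mono m a b =>
    exact ⟨fun x => ((b : ℂ)/2) * monoE ε (m+1) a (b-2) x,
      .mul _ (.mono (m+1) a (b-2)), fun x hx => monoE_T ε hε m a b x hx⟩
  | zero m =>
    refine ⟨fun _ => 0, .zero (m+1), fun x hx => ?_⟩
    simp [pd, fderiv_const]
  | add hf hg ihf ihg =>
    obtain ⟨g₁, hg₁, he₁⟩ := ihf
    obtain ⟨g₂, hg₂, he₂⟩ := ihg
    refine ⟨fun x => g₁ x + g₂ x, .add hg₁ hg₂, fun x hx => ?_⟩
    simp only [pd_add 0 (hf.diff x hx) (hg.diff x hx), pd_add 1 (hf.diff x hx) (hg.diff x hx),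
      ← he₁ x hx, ← he₂ x hx]
    ring
  | mul c hf ihf =>
    obtain ⟨g₁, hg₁, he₁⟩ := ihf
    refine ⟨fun x => c * g₁ x, .mul c hg₁, fun x hx => ?_⟩
    simp only [pd_const_mul 0 c (hf.diff x hx), pd_const_mul 1 c (hf.diff x hx), ← he₁ x hx]
    ring

lemma InSpan.J3 {ε : ℂ} (hε : ε ^ 2 = -1) {m : ℕ} {f : E3 → ℂ} (h : InSpan ε m f) :
    ∀ x : E3, x ≠ 0 →
      -Complex.I * ((x 0 : ℂ) * pd 1 f x - (x 1 : ℂ) * pd 0 f x)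
        = -Complex.I * ε * (m : ℂ) * f x := by
  induction h with
  | mono m a b => exact fun x hx => monoE_J3 ε hε m a b x hx
  | zero m =>
    intro x hx
    simp [pd, fderiv_const]
  | add hf hg ihf ihg =>
    intro x hx
    rw [pd_add 0 (hf.diff x hx) (hg.diff x hx), pd_add 1 (hf.diff x hx) (hg.diff x hx)]
    have h₁ := ihf x hx
    have h₂ := ihg x hx
    ring_nf
    ring_nf at h₁ h₂
    linear_combination h₁ + h₂
  | mul c hf ihf =>
    intro x hx
    rw [pd_const_mul 0 c (hf.diff x hx), pd_const_mul 1 c (hf.diff x hx)]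
    have h₁ := ihf x hx
    linear_combination c * h₁

def RepM (ε : ℂ) (m : ℕ) (f : E3 → ℂ) : Prop :=
  ∃ g, InSpan ε m g ∧ ∀ x : E3, x ≠ 0 → f x = g x

lemma RepM.pd2 {ε : ℂ} {m : ℕ} {f : E3 → ℂ} (h : RepM ε m f) : RepM ε m (pd 2 f) := by
  obtain ⟨g, hg, he⟩ := h
  obtain ⟨g', hg', he'⟩ := hg.pd2
  exact ⟨g', hg', fun x hx => (pd_congr 2 hx he).trans (he' x hx)⟩

lemma RepM.cdbarOp {m : ℕ} {f : E3 → ℂ} (h : RepM Complex.I m f) :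
    RepM Complex.I (m+1) (cdbar f) := by
  obtain ⟨g, hg, he⟩ := h
  obtain ⟨g', hg', he'⟩ := hg.T Complex.I_sq
  refine ⟨g', hg', fun x hx => ?_⟩
  unfold cdbar
  rw [pd_congr 0 hx he, pd_congr 1 hx he]
  exact he' x hx

lemma RepM.cdOp {m : ℕ} {f : E3 → ℂ} (h : RepM (-Complex.I) m f) :
    RepM (-Complex.I) (m+1) (cd f) := by
  obtain ⟨g, hg, he⟩ := h
  obtain ⟨g', hg', he'⟩ := hg.T (by rw [neg_pow, Complex.I_sq]; ring)
  refine ⟨g', hg', fun x hx => ?_⟩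
  unfold cd
  rw [pd_congr 0 hx he, pd_congr 1 hx he, ← he' x hx]
  ring

lemma RepM.invr (ε : ℂ) : RepM ε 0 invr := by
  refine ⟨monoE ε 0 0 (-1), .mono 0 0 (-1), fun x hx => ?_⟩
  simp [_root_.invr, monoE, zpow_neg]

lemma RepM.pd2_iter {ε : ℂ} {m : ℕ} {f : E3 → ℂ} (h : RepM ε m f) (k : ℕ) :
    RepM ε m ((pd 2)^[k] f) := by
  induction k with
  | zero => simpa using h
  | succ k ih => rw [Function.iterate_succ_apply']; exact ih.pd2

lemma RepM.cdbar_iter {m : ℕ} {f : E3 → ℂ} (h : RepM Complex.I m f) (k : ℕ) :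
    RepM Complex.I (m+k) (cdbar^[k] f) := by
  induction k with
  | zero => simpa using h
  | succ k ih => rw [Function.iterate_succ_apply']; simpa [← Nat.add_assoc] using ih.cdbarOp

lemma RepM.cd_iter {m : ℕ} {f : E3 → ℂ} (h : RepM (-Complex.I) m f) (k : ℕ) :
    RepM (-Complex.I) (m+k) (cd^[k] f) := by
  induction k with
  | zero => simpa using h
  | succ k ih => rw [Function.iterate_succ_apply']; simpa [← Nat.add_assoc] using ih.cdOp

theorem Fnn_J3_eigenfunction (N : ℕ) (n : ℤ) (h1 : -(N : ℤ) ≤ n) (h2 : n ≤ (N : ℤ)) :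
    ∀ x : E3, x ≠ 0 →
      -Complex.I * ((x 0 : ℂ) * pd 1 (Fnn N n) x - (x 1 : ℂ) * pd 0 (Fnn N n) x)
        = (n : ℂ) * Fnn N n x := by
  intro x hx
  by_cases hn : 0 ≤ n
  · simp only [Fnn, if_pos hn]
    have hrep : RepM Complex.I n.toNat (cdbar^[n.toNat] ((pd 2)^[((N : ℤ) - n).toNat] invr)) := by
      simpa using ((RepM.invr Complex.I).pd2_iter (((N : ℤ) - n).toNat)).cdbar_iter n.toNat
    obtain ⟨g, hg, he⟩ := hrep
    rw [pd_congr 0 hx he, pd_congr 1 hx he, he x hx]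
    rw [hg.J3 Complex.I_sq x hx]
    have : ((n.toNat : ℕ) : ℂ) = (n : ℂ) := by
      exact_mod_cast congrArg (fun z : ℤ => (z : ℂ)) (Int.toNat_of_nonneg hn)
    rw [this]
    have hI : -Complex.I * Complex.I = 1 := by
      rw [neg_mul, Complex.I_mul_I]; ring
    rw [mul_assoc (-Complex.I) Complex.I, ← mul_assoc, hI, one_mul]
  · push_neg at hn
    simp only [Fnn, if_neg (not_le.mpr hn)]
    have hrep : RepM (-Complex.I) (-n).toNat
        (cd^[(-n).toNat] ((pd 2)^[((N : ℤ) + n).toNat] invr)) := by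
      simpa using ((RepM.invr (-Complex.I)).pd2_iter (((N : ℤ) + n).toNat)).cd_iter (-n).toNat
    obtain ⟨g, hg, he⟩ := hrep
    rw [pd_congr 0 hx he, pd_congr 1 hx he, he x hx]
    rw [hg.J3 (by rw [neg_pow, Complex.I_sq]; ring) x hx]
    have h1' : (((-n).toNat : ℕ) : ℂ) = ((-n : ℤ) : ℂ) := by
      exact_mod_cast congrArg (fun z : ℤ => (z : ℂ)) (Int.toNat_of_nonneg (by omega : (0:ℤ) ≤ -n))
    rw [h1']
    have hI : -Complex.I * -Complex.I = -1 := by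
      rw [neg_mul_neg, Complex.I_mul_I]
    rw [mul_assoc (-Complex.I) (-Complex.I) _, ← mul_assoc, hI]
    push_cast
    ring
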